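/- A null tetrahedron is completely determined by its planar image: let H = {v ∈ ℝ⁴ : v₀ = v₃} be the null hyperplane t = z, and let p, q : Fin 4 → ℝ⁴ be two quadruples of points, all lying in H, such that each quadruple is affinely independent and the planar images agree: (pᵢ)₁ = (qᵢ)₁ and (pᵢ)₂ = (qᵢ)₂ for every i (the two tetrahedra project to the same four points of the quotient plane of lightrays). Then there exist a linear map Λ : ℝ⁴ → ℝ⁴ preserving η (η(Λu, Λv) = η(u,v) for all u, v) and a translation vector w ∈ ℝ⁴ such that Λ pᵢ + w = qᵢ for every i; that is, the two null tetrahedra are congruent under an isometry of Minkowski spacetime. -/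

import Mathlib

/-- The Minkowski bilinear form on `ℝ⁴` with signature `(-,+,+,+)`,
coordinates `(t,x,y,z)`. -/
def eta (x y : Fin 4 → ℝ) : ℝ :=
  -(x 0 * y 0) + x 1 * y 1 + x 2 * y 2 + x 3 * y 3

lemma null_tetra_det_ne (r : Fin 4 → Fin 4 → ℝ) (hH : ∀ i, r i 0 = r i 3)
    (h : AffineIndependent ℝ r) :
    (Matrix.of fun i j : Fin 3 => r i.succ j.castSucc - r 0 j.castSucc).det ≠ 0 := by
  have li1 : LinearIndependent ℝ fun i : { x : Fin 4 // x ≠ 0 } => r i - r 0 :=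
    (affineIndependent_iff_linearIndependent_vsub ℝ r 0).mp h
  have li2 : LinearIndependent ℝ fun i : Fin 3 => r i.succ - r 0 := by
    have := li1.comp (fun i : Fin 3 => (⟨i.succ, Fin.succ_ne_zero i⟩ : { x : Fin 4 // x ≠ 0 }))
      (fun a b hab => by
        simpa using Fin.succ_injective _ (congrArg Subtype.val hab))
    exact this
  have lirows : LinearIndependent ℝ
      (fun i : Fin 3 => (Matrix.of fun i j : Fin 3 => r i.succ j.castSucc - r 0 j.castSucc) i) := by
    rw [Fintype.linearIndependent_iff] at li2 ⊢
    intro g hg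
    apply li2
    have hcomp : ∀ j : Fin 3,
        (∑ i, g i • (Matrix.of fun i j : Fin 3 => r i.succ j.castSucc - r 0 j.castSucc) i) j = 0 :=
      fun j => by rw [hg]; rfl
    funext j
    have h0 := hcomp 0
    have h1 := hcomp 1
    have h2 := hcomp 2
    simp [Fin.sum_univ_three, Matrix.of_apply] at h0 h1 h2 ⊢
    fin_cases j
    · simpa using h0
    · simpa using h1
    · simpa using h2
    · simpa [hH 0, hH 1, hH 2, hH 3] using h0
  have : IsUnit (Matrix.of fun i j : Fin 3 => r i.succ j.castSucc - r 0 j.castSucc) :=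
    Matrix.linearIndependent_rows_iff_isUnit.mp lirows
  exact ((Matrix.isUnit_iff_isUnit_det _).mp this).ne_zero

set_option maxHeartbeats 1000000 in
/-- A null tetrahedron is completely determined by its planar image: if two
affinely independent quadruples of points lie in the null hyperplane
`H = {t = z}` and have the same planar images (the same `(x,y)` coordinates,
i.e. the same lightrays in the quotient plane), then they are congruent under
an isometry of Minkowski spacetime: a linear map preserving `η` followed by a
translation. -/
theorem null_tetrahedron_determined_by_planar_image
    (p q : Fin 4 → Fin 4 → ℝ)
    (hpH : ∀ i, p i 0 = p i 3) (hqH : ∀ i, q i 0 = q i 3)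
    (hp : AffineIndependent ℝ p) (hq : AffineIndependent ℝ q)
    (hx : ∀ i, p i 1 = q i 1) (hy : ∀ i, p i 2 = q i 2) :
    ∃ (Λ : (Fin 4 → ℝ) →ₗ[ℝ] (Fin 4 → ℝ)) (w : Fin 4 → ℝ),
      (∀ x y : Fin 4 → ℝ, eta (Λ x) (Λ y) = eta x y) ∧
      ∀ i, Λ (p i) + w = q i := by
  set Mp : Matrix (Fin 3) (Fin 3) ℝ :=
    Matrix.of fun i j : Fin 3 => p i.succ j.castSucc - p 0 j.castSucc with hMp
  set Mq : Matrix (Fin 3) (Fin 3) ℝ :=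
    Matrix.of fun i j : Fin 3 => q i.succ j.castSucc - q 0 j.castSucc with hMq
  have hdp : Mp.det ≠ 0 := null_tetra_det_ne p hpH hp
  have hdq : Mq.det ≠ 0 := null_tetra_det_ne q hqH hq
  set b : Fin 3 → ℝ := fun i => q i.succ 0 - q 0 0 with hb
  set c : Fin 3 → ℝ := (Mp.det)⁻¹ • Matrix.cramer Mp b with hc
  have hsolve : Mp.mulVec c = b := by
    rw [hc, Matrix.mulVec_smul, Matrix.mulVec_cramer, smul_smul, inv_mul_cancel₀ hdp, one_smul]
  have e0 : (Fin.castSucc (0 : Fin 3)) = (0 : Fin 4) := rfl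
  have e1 : (Fin.castSucc (1 : Fin 3)) = (1 : Fin 4) := rfl
  have e2 : (Fin.castSucc (2 : Fin 3)) = (2 : Fin 4) := rfl
  have hupd : Mp.updateCol 0 b = Mq := by
    ext i j
    fin_cases j <;>
      simp [Matrix.updateCol_apply, hMp, hMq, hb, e0, e1, e2, hx, hy]
  set lam : ℝ := c 0 with hlamdef
  set A : ℝ := c 1 with hA
  set B : ℝ := c 2 with hB
  have hlam : lam ≠ 0 := by
    rw [hlamdef, hc]
    simp only [Pi.smul_apply, smul_eq_mul, Matrix.cramer_apply, hupd]
    exact mul_ne_zero (inv_ne_zero hdp) hdq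
  have hkey : ∀ i : Fin 4, q i 0 - q 0 0 =
      lam * (p i 0 - p 0 0) + A * (p i 1 - p 0 1) + B * (p i 2 - p 0 2) := by
    intro i
    induction i using Fin.cases with
    | zero => ring
    | succ k =>
      have := congrFun hsolve k
      rw [Matrix.mulVec, dotProduct, Fin.sum_univ_three] at this
      rw [hMp] at this
      simp only [Matrix.of_apply, e0, e1, e2] at this
      have hbk : (q k.succ 0 - q 0 0) = b k := rfl
      rw [hbk, ← this, hlamdef, hA, hB]
      ring
  clear_value c lam A B
  clear hc hlamdef hA hB
  set K : ℝ := A ^ 2 + B ^ 2 with hK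
  set L : Matrix (Fin 4) (Fin 4) ℝ :=
    !![(1/lam + lam + K/lam)/2, A, B, (lam - 1/lam - K/lam)/2;
       A/lam, 1, 0, -(A/lam);
       B/lam, 0, 1, -(B/lam);
       (lam + K/lam - 1/lam)/2, A, B, (lam + 1/lam - K/lam)/2] with hL
  have hact : ∀ v : Fin 4 → ℝ, v 0 = v 3 →
      L.mulVec v = ![lam * v 0 + A * v 1 + B * v 2, v 1, v 2,
        lam * v 0 + A * v 1 + B * v 2] := by
    intro v hv
    funext j
    fin_cases j <;>
      simp [hL, Matrix.mulVec, dotProduct, Fin.sum_univ_four, ← hv, hK] <;>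
      field_simp <;> ring
  refine ⟨Matrix.toLin' L, q 0 - L.mulVec (p 0), ?_, ?_⟩
  · intro x y
    simp only [Matrix.toLin'_apply, Matrix.mulVec, dotProduct, Fin.sum_univ_four, eta, hL,
      Matrix.cons_val', Matrix.cons_val_zero, Matrix.cons_val_one, Matrix.head_cons,
      Matrix.empty_val', Matrix.cons_val_fin_one, Matrix.head_fin_const,
      Matrix.cons_val_two, Matrix.tail_cons, Matrix.cons_val_three, hK, Matrix.of_apply,
      Matrix.cons_val]
    field_simp
    ring
  · intro i
    have happ : ∀ v : Fin 4 → ℝ, (Matrix.toLin' L) v = L.mulVec v := fun v => rfl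
    rw [happ, hact (p i) (hpH i), hact (p 0) (hpH 0)]
    have hk := hkey i
    funext j
    have hj0 : (![lam * p i 0 + A * p i 1 + B * p i 2, p i 1, p i 2,
        lam * p i 0 + A * p i 1 + B * p i 2] + (q 0 - ![lam * p 0 0 + A * p 0 1 + B * p 0 2,
        p 0 1, p 0 2, lam * p 0 0 + A * p 0 1 + B * p 0 2])) j
        = ![lam * p i 0 + A * p i 1 + B * p i 2, p i 1, p i 2,
        lam * p i 0 + A * p i 1 + B * p i 2] j + (q 0 j
        - ![lam * p 0 0 + A * p 0 1 + B * p 0 2, p 0 1, p 0 2,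
        lam * p 0 0 + A * p 0 1 + B * p 0 2] j) := rfl
    rw [hj0]
    fin_cases j
    · show lam * p i 0 + A * p i 1 + B * p i 2 + (q 0 0
        - (lam * p 0 0 + A * p 0 1 + B * p 0 2)) = q i 0
      linarith [hk]
    · show p i 1 + (q 0 1 - p 0 1) = q i 1
      linarith [hx i, hx 0]
    · show p i 2 + (q 0 2 - p 0 2) = q i 2
      linarith [hy i, hy 0]
    · show lam * p i 0 + A * p i 1 + B * p i 2 + (q 0 3
        - (lam * p 0 0 + A * p 0 1 + B * p 0 2)) = q i 3
      linarith [hk, hqH i, hqH 0]
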